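/- Let u and v be positive integers and let z be a complex number with Re(z) > 0 and Im(z) > 0. Then z is a complex (u,v)-orphan — i.e., there is no complex number w with Re(w) > 0 and Im(w) > 0 such that z = w + v or z = w/(uw + 1) — if and only if Re(z) ≤ v and |2uz − 1| ≥ 1. -/

import Mathlib

theorem stmt_12 (u v : ℕ) (hu : 0 < u) (hv : 0 < v) (z : ℂ)
    (hre : 0 < z.re) (him : 0 < z.im) :
    (¬∃ w : ℂ, 0 < w.re ∧ 0 < w.im ∧
        (z = w + v ∨ z = w / (u * w + 1))) ↔
      (z.re ≤ v ∧ 1 ≤ ‖2 * u * z - 1‖) := by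
  have hupos : (0:ℝ) < (u:ℝ) := by exact_mod_cast hu
  constructor
  · intro hno
    constructor
    · by_contra h
      push_neg at h
      exact hno ⟨z - v, by simpa using by linarith, by simpa using him,
        Or.inl (by ring)⟩
    · by_contra h
      push_neg at h
      set c : ℂ := 1 - (u:ℂ) * z with hc_def
      have hc : c ≠ 0 := by
        intro hc0
        have : c.im = 0 := by rw [hc0]; simp
        simp [hc_def, Complex.sub_im, Complex.mul_im] at this
        rcases this with h' | h'
        · exact absurd h' hu.ne'
        · linarith
      have hns : 0 < Complex.normSq c := Complex.normSq_pos.mpr hc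
      have hsq : Complex.normSq (2 * (u:ℂ) * z - 1) < 1 := by
        rw [← Complex.sq_norm]
        nlinarith [norm_nonneg (2 * (u:ℂ) * z - 1)]
      have hkey : (u:ℝ) * (z.re ^ 2 + z.im ^ 2) < z.re := by
        have := hsq
        simp [Complex.normSq_apply, Complex.sub_re, Complex.sub_im,
          Complex.mul_re, Complex.mul_im] at this
        nlinarith
      refine hno ⟨z / c, ?_, ?_, Or.inr ?_⟩
      · have hnum : 0 < (z.re * c.re + z.im * c.im) / Complex.normSq c := by
          apply div_pos _ hns
          simp [hc_def, Complex.sub_re, Complex.sub_im, Complex.mul_re,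
          Complex.mul_im]
          nlinarith
        rw [Complex.div_re]
        rw [add_div] at hnum
        exact hnum
      · have hnum : 0 < (z.im * c.re - z.re * c.im) / Complex.normSq c := by
          apply div_pos _ hns
          simp [hc_def, Complex.sub_re, Complex.sub_im, Complex.mul_re,
            Complex.mul_im]
          nlinarith
        rw [Complex.div_im]
        rw [sub_div] at hnum
        exact hnum
      · have h1 : (u:ℂ) * (z / c) + 1 = 1 / c := by
          field_simp [hc_def]
          rw [hc_def]; ring
        rw [h1]
        field_simp
  · rintro ⟨hle, habs⟩ ⟨w, hwre, hwim, h | h⟩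
    · have : z.re = w.re + v := by rw [h]; simp
      linarith
    · have hd : ((u:ℂ) * w + 1) ≠ 0 := by
        intro h0
        have : ((u:ℂ) * w + 1).re = 0 := by rw [h0]; simp
        simp [Complex.add_re, Complex.mul_re] at this
        nlinarith
      have heq : 2 * (u:ℂ) * z - 1 = ((u:ℂ) * w - 1) / ((u:ℂ) * w + 1) := by
        rw [h]
        field_simp
        ring
      have hlt : ‖(u:ℂ) * w - 1‖ < ‖(u:ℂ) * w + 1‖ := by
        rw [Complex.norm_def, Complex.norm_def]
        apply Real.sqrt_lt_sqrt (Complex.normSq_nonneg _)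
        simp [Complex.normSq_apply, Complex.sub_re, Complex.sub_im,
          Complex.add_re, Complex.add_im, Complex.mul_re, Complex.mul_im]
        nlinarith
      have hpos : 0 < ‖(u:ℂ) * w + 1‖ :=
        (norm_pos_iff.mpr hd)
      have : ‖2 * (u:ℂ) * z - 1‖ < 1 := by
        rw [heq, norm_div]
        rw [div_lt_one hpos]
        exact hlt
      linarith
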